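/- (Exponentially weighted convolution lemma used in the proof of Theorem 3.2(a).) Let γ > 0, C > 0 and 0 < κ < 2γ. Let h : [0,∞) → ℝ be Borel measurable with |h(s)| ≤ C·e^{−2γs} for all s ≥ 0, and let y : [0,∞) → ℝ be Borel measurable, bounded on compact intervals, with e^{κt}·y(t) → 0 as t → ∞. Then e^{κt}·∫₀^t h(s)·y(t−s) ds → 0 as t → ∞. -/

import Mathlib

open MeasureTheory Filter Set

lemma exp_int_le (c a b : ℝ) (hc : 0 < c) (hab : a ≤ b) :
    ∫ s in a..b, Real.exp (-(c * s)) ≤ Real.exp (-(c * a)) / c := by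
  have hcont : Continuous fun s : ℝ => Real.exp (-(c * s)) :=
    Real.continuous_exp.comp (continuous_const.mul continuous_id).neg
  have hd : ∀ s ∈ Set.uIcc a b,
      HasDerivAt (fun u => -(Real.exp (-(c * u)) / c)) (Real.exp (-(c * s))) s := by
    intro s _
    have h1 : HasDerivAt (fun u : ℝ => -(c * u)) (-c) s := by
      simpa using ((hasDerivAt_id s).const_mul c).fun_neg
    have h2 : HasDerivAt (fun u : ℝ => Real.exp (-(c * u)))
        (Real.exp (-(c * s)) * (-c)) s := (Real.hasDerivAt_exp _).comp s h1
    have h3 := (h2.div_const c).fun_neg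
    refine h3.congr_deriv ?_
    rw [mul_neg, neg_div, neg_neg, mul_div_assoc, div_self hc.ne', mul_one]
  rw [intervalIntegral.integral_eq_sub_of_hasDerivAt hd (hcont.intervalIntegrable a b)]
  have h1 : 0 ≤ Real.exp (-(c * b)) / c := by positivity
  have h2 : -(Real.exp (-(c * b)) / c) - -(Real.exp (-(c * a)) / c)
      = Real.exp (-(c * a)) / c - Real.exp (-(c * b)) / c := by ring
  rw [h2]; linarith

/-- Exponentially weighted convolution lemma used in the proof of
Theorem 3.2(a). -/
theorem stmt8 (γ C κ : ℝ) (hγ : 0 < γ) (hC : 0 < C) (hκpos : 0 < κ) (hκlt : κ < 2 * γ)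
    (h y : ℝ → ℝ) (hhmeas : Measurable h)
    (hhb : ∀ s ≥ (0:ℝ), |h s| ≤ C * Real.exp (-(2 * γ) * s))
    (hymeas : Measurable y)
    (hybdd : ∀ T : ℝ, ∃ K : ℝ, ∀ t ∈ Set.Icc (0:ℝ) T, |y t| ≤ K)
    (hyto : Tendsto (fun t => Real.exp (κ * t) * y t) atTop (nhds 0)) :
    Tendsto (fun t => Real.exp (κ * t) * ∫ s in (0:ℝ)..t, h s * y (t - s))
      atTop (nhds 0) := by
  set ε' : ℝ := 2 * γ - κ with hε'def
  have hε' : 0 < ε' := by rw [hε'def]; linarith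
  set g : ℝ → ℝ := fun u => Real.exp (κ * u) * |y u| with hgdef
  have hg0 : ∀ u, 0 ≤ g u := fun u => mul_nonneg (Real.exp_pos _).le (abs_nonneg _)
  have hgabs : ∀ u, g u = |Real.exp (κ * u) * y u| := by
    intro u
    rw [hgdef, abs_mul, abs_of_pos (Real.exp_pos _)]
  have hgmeas : Measurable g :=
    (Real.measurable_exp.comp (measurable_id.const_mul κ)).mul hymeas.abs
  -- global bound M for g on [0, ∞)
  obtain ⟨N, hN⟩ := Metric.tendsto_atTop.mp hyto 1 one_pos
  obtain ⟨K, hK⟩ := hybdd (max N 0)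
  have hK0 : 0 ≤ K := (abs_nonneg _).trans (hK 0 ⟨le_refl _, le_max_right _ _⟩)
  set M : ℝ := max 1 (Real.exp (κ * max N 0) * K) with hMdef
  have hM0 : 0 < M := lt_of_lt_of_le one_pos (le_max_left _ _)
  have hgM : ∀ u, 0 ≤ u → g u ≤ M := by
    intro u hu
    rcases le_total N u with hNu | hNu
    · have h1 := hN u hNu
      rw [Real.dist_eq, sub_zero] at h1
      rw [hgabs]
      exact h1.le.trans (le_max_left _ _)
    · have hu' : u ∈ Set.Icc (0:ℝ) (max N 0) := ⟨hu, le_max_of_le_left hNu⟩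
      have h2 : Real.exp (κ * u) ≤ Real.exp (κ * max N 0) :=
        Real.exp_le_exp.mpr (mul_le_mul_of_nonneg_left (le_max_of_le_left hNu) hκpos.le)
      calc g u ≤ Real.exp (κ * u) * K :=
            mul_le_mul_of_nonneg_left (hK u hu') (Real.exp_pos _).le
        _ ≤ Real.exp (κ * max N 0) * K := mul_le_mul_of_nonneg_right h2 hK0
        _ ≤ M := le_max_right _ _
  rw [NormedAddCommGroup.tendsto_nhds_zero]
  intro ε hε
  set δ' : ℝ := ε * ε' / (4 * C) with hδ'def
  have hδ'pos : 0 < δ' := by rw [hδ'def]; positivity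
  obtain ⟨T₁, hT₁⟩ := Metric.tendsto_atTop.mp hyto δ' hδ'pos
  have hgδ : ∀ u, T₁ ≤ u → g u ≤ δ' := by
    intro u hu
    have h1 := hT₁ u hu
    rw [Real.dist_eq, sub_zero] at h1
    rw [hgabs]; exact h1.le
  -- second term tends to 0
  have h0 : Tendsto (fun t : ℝ => ε' * (t / 2)) atTop atTop :=
    (tendsto_id.atTop_div_const two_pos).const_mul_atTop hε'
  have htend : Tendsto (fun t : ℝ => C * M * Real.exp (-(ε' * (t / 2))) / ε')
      atTop (nhds 0) := by
    have h1 : Tendsto (fun t : ℝ => Real.exp (-(ε' * (t / 2)))) atTop (nhds 0) :=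
      Real.tendsto_exp_neg_atTop_nhds_zero.comp h0
    have h2 := (h1.const_mul (C * M)).div_const ε'
    simpa using h2
  have hev1 : ∀ᶠ t : ℝ in atTop, C * M * Real.exp (-(ε' * (t / 2))) / ε' < ε / 2 :=
    htend.eventually (gt_mem_nhds (by linarith : (0:ℝ) < ε / 2))
  filter_upwards [hev1, eventually_ge_atTop (max 0 (2 * T₁))] with t h2small htge
  have ht0 : (0:ℝ) ≤ t := le_trans (le_max_left _ _) htge
  have htT₁ : T₁ ≤ t / 2 := by
    have := le_trans (le_max_right _ _) htge; linarith
  -- integrability facts for this fixed t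
  have hψmeas : Measurable fun s => h s * y (t - s) :=
    hhmeas.mul (hymeas.comp (measurable_const.sub measurable_id))
  obtain ⟨Kt, hKt⟩ := hybdd t
  have hψint : IntegrableOn (fun s => h s * y (t - s)) (Set.Ioc 0 t) := by
    apply Measure.integrableOn_of_bounded (M := C * Kt) measure_Ioc_lt_top.ne
      hψmeas.aestronglyMeasurable
    filter_upwards [ae_restrict_mem measurableSet_Ioc] with s hs
    have hs0 : 0 ≤ s := hs.1.le
    have hst : t - s ∈ Set.Icc (0:ℝ) t := ⟨by linarith [hs.2], by linarith⟩
    have h1 : |h s| ≤ C := by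
      have := hhb s hs0
      have h2 : Real.exp (-(2 * γ) * s) ≤ 1 := Real.exp_le_one_iff.mpr (by nlinarith)
      nlinarith
    rw [Real.norm_eq_abs, abs_mul]
    exact mul_le_mul h1 (hKt _ hst) (abs_nonneg _) hC.le
  have hφmeas : Measurable fun s : ℝ => C * Real.exp (-(ε' * s)) * g (t - s) :=
    (measurable_const.mul (Real.measurable_exp.comp (measurable_id.const_mul ε').neg)).mul
      (hgmeas.comp (measurable_const.sub measurable_id))
  have hφint : IntegrableOn (fun s : ℝ => C * Real.exp (-(ε' * s)) * g (t - s))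
      (Set.Ioc 0 t) := by
    apply Measure.integrableOn_of_bounded (M := C * M) measure_Ioc_lt_top.ne
      hφmeas.aestronglyMeasurable
    filter_upwards [ae_restrict_mem measurableSet_Ioc] with s hs
    have hs0 : 0 ≤ s := hs.1.le
    have hst : 0 ≤ t - s := by linarith [hs.2]
    rw [Real.norm_eq_abs, abs_of_nonneg (mul_nonneg (by positivity) (hg0 _))]
    have h1 : Real.exp (-(ε' * s)) ≤ 1 := Real.exp_le_one_iff.mpr (by nlinarith)
    calc C * Real.exp (-(ε' * s)) * g (t - s) ≤ C * 1 * M := by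
          apply mul_le_mul _ (hgM _ hst) (hg0 _) (by positivity)
          exact mul_le_mul_of_nonneg_left h1 hC.le
      _ = C * M := by ring
  have hψii : IntervalIntegrable (fun s => h s * y (t - s)) volume 0 t :=
    (intervalIntegrable_iff_integrableOn_Ioc_of_le ht0).mpr hψint
  have hφii : IntervalIntegrable (fun s : ℝ => C * Real.exp (-(ε' * s)) * g (t - s))
      volume 0 t :=
    (intervalIntegrable_iff_integrableOn_Ioc_of_le ht0).mpr hφint
  have hφii1 : IntervalIntegrable (fun s : ℝ => C * Real.exp (-(ε' * s)) * g (t - s))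
      volume 0 (t / 2) := by
    apply hφii.mono_set
    rw [Set.uIcc_of_le (by linarith : (0:ℝ) ≤ t / 2), Set.uIcc_of_le ht0]
    exact Set.Icc_subset_Icc le_rfl (by linarith)
  have hφii2 : IntervalIntegrable (fun s : ℝ => C * Real.exp (-(ε' * s)) * g (t - s))
      volume (t / 2) t := by
    apply hφii.mono_set
    rw [Set.uIcc_of_le (by linarith : t / 2 ≤ t), Set.uIcc_of_le ht0]
    exact Set.Icc_subset_Icc (by linarith) le_rfl
  -- key pointwise-to-integral bound
  have key : |Real.exp (κ * t) * ∫ s in (0:ℝ)..t, h s * y (t - s)| ≤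
      ∫ s in (0:ℝ)..t, C * Real.exp (-(ε' * s)) * g (t - s) := by
    rw [abs_mul, abs_of_pos (Real.exp_pos _)]
    calc Real.exp (κ * t) * |∫ s in (0:ℝ)..t, h s * y (t - s)|
        ≤ Real.exp (κ * t) * ∫ s in (0:ℝ)..t, |h s * y (t - s)| :=
          mul_le_mul_of_nonneg_left (intervalIntegral.abs_integral_le_integral_abs ht0)
            (Real.exp_pos _).le
      _ = ∫ s in (0:ℝ)..t, Real.exp (κ * t) * |h s * y (t - s)| :=
          (intervalIntegral.integral_const_mul _ _).symm
      _ ≤ ∫ s in (0:ℝ)..t, C * Real.exp (-(ε' * s)) * g (t - s) := by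
          apply intervalIntegral.integral_mono_on ht0 (hψii.abs.const_mul _) hφii
          intro s hs
          have hs0 : 0 ≤ s := hs.1
          have hst : 0 ≤ t - s := by linarith [hs.2]
          rw [abs_mul]
          have e1 : Real.exp (κ * t) = Real.exp (κ * s) * Real.exp (κ * (t - s)) := by
            rw [← Real.exp_add]; congr 1; ring
          have h2 : Real.exp (κ * s) * |h s| ≤ C * Real.exp (-(ε' * s)) := by
            calc Real.exp (κ * s) * |h s|
                ≤ Real.exp (κ * s) * (C * Real.exp (-(2 * γ) * s)) :=
                  mul_le_mul_of_nonneg_left (hhb s hs0) (Real.exp_pos _).le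
              _ = C * (Real.exp (κ * s) * Real.exp (-(2 * γ) * s)) := by ring
              _ = C * Real.exp (-(ε' * s)) := by
                  rw [← Real.exp_add]; congr 1; rw [hε'def]; ring
          calc Real.exp (κ * t) * (|h s| * |y (t - s)|)
              = (Real.exp (κ * s) * |h s|) * (Real.exp (κ * (t - s)) * |y (t - s)|) := by
                rw [e1]; ring
            _ = (Real.exp (κ * s) * |h s|) * g (t - s) := by rw [hgdef]
            _ ≤ (C * Real.exp (-(ε' * s))) * g (t - s) :=
                mul_le_mul_of_nonneg_right h2 (hg0 _)
  -- split the integral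
  have hsplit : ∫ s in (0:ℝ)..t, C * Real.exp (-(ε' * s)) * g (t - s) =
      (∫ s in (0:ℝ)..(t / 2), C * Real.exp (-(ε' * s)) * g (t - s)) +
      ∫ s in (t / 2)..t, C * Real.exp (-(ε' * s)) * g (t - s) :=
    (intervalIntegral.integral_add_adjacent_intervals hφii1 hφii2).symm
  -- bound the first piece
  have hb1 : ∫ s in (0:ℝ)..(t / 2), C * Real.exp (-(ε' * s)) * g (t - s) ≤ ε / 4 := by
    have hcont1 : Continuous fun s : ℝ => C * Real.exp (-(ε' * s)) * δ' :=
      ((continuous_const.mul (Real.continuous_exp.comp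
        (continuous_const.mul continuous_id).neg))).mul continuous_const
    have hmono : ∫ s in (0:ℝ)..(t / 2), C * Real.exp (-(ε' * s)) * g (t - s) ≤
        ∫ s in (0:ℝ)..(t / 2), C * Real.exp (-(ε' * s)) * δ' := by
      apply intervalIntegral.integral_mono_on (by linarith) hφii1
        (hcont1.intervalIntegrable _ _)
      intro s hs
      have hTs : T₁ ≤ t - s := by
        have := hs.2; linarith
      exact mul_le_mul_of_nonneg_left (hgδ _ hTs) (by positivity)
    have heq : ∫ s in (0:ℝ)..(t / 2), C * Real.exp (-(ε' * s)) * δ' =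
        (C * δ') * ∫ s in (0:ℝ)..(t / 2), Real.exp (-(ε' * s)) := by
      rw [← intervalIntegral.integral_const_mul]
      congr 1; ext s; ring
    have hexp : ∫ s in (0:ℝ)..(t / 2), Real.exp (-(ε' * s)) ≤ 1 / ε' := by
      have := exp_int_le ε' 0 (t / 2) hε' (by linarith)
      simpa using this
    calc ∫ s in (0:ℝ)..(t / 2), C * Real.exp (-(ε' * s)) * g (t - s)
        ≤ (C * δ') * ∫ s in (0:ℝ)..(t / 2), Real.exp (-(ε' * s)) := by
          rw [← heq]; exact hmono
      _ ≤ (C * δ') * (1 / ε') := mul_le_mul_of_nonneg_left hexp (by positivity)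
      _ = ε / 4 := by rw [hδ'def]; field_simp
  -- bound the second piece
  have hb2 : ∫ s in (t / 2)..t, C * Real.exp (-(ε' * s)) * g (t - s) ≤
      C * M * Real.exp (-(ε' * (t / 2))) / ε' := by
    have hcont2 : Continuous fun s : ℝ => C * Real.exp (-(ε' * s)) * M :=
      ((continuous_const.mul (Real.continuous_exp.comp
        (continuous_const.mul continuous_id).neg))).mul continuous_const
    have hmono : ∫ s in (t / 2)..t, C * Real.exp (-(ε' * s)) * g (t - s) ≤
        ∫ s in (t / 2)..t, C * Real.exp (-(ε' * s)) * M := by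
      apply intervalIntegral.integral_mono_on (by linarith) hφii2
        (hcont2.intervalIntegrable _ _)
      intro s hs
      have hst : 0 ≤ t - s := by linarith [hs.2]
      exact mul_le_mul_of_nonneg_left (hgM _ hst) (by positivity)
    have heq : ∫ s in (t / 2)..t, C * Real.exp (-(ε' * s)) * M =
        (C * M) * ∫ s in (t / 2)..t, Real.exp (-(ε' * s)) := by
      rw [← intervalIntegral.integral_const_mul]
      congr 1; ext s; ring
    have hexp := exp_int_le ε' (t / 2) t hε' (by linarith)
    calc ∫ s in (t / 2)..t, C * Real.exp (-(ε' * s)) * g (t - s)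
        ≤ (C * M) * ∫ s in (t / 2)..t, Real.exp (-(ε' * s)) := by
          rw [← heq]; exact hmono
      _ ≤ (C * M) * (Real.exp (-(ε' * (t / 2))) / ε') :=
          mul_le_mul_of_nonneg_left hexp (by positivity)
      _ = C * M * Real.exp (-(ε' * (t / 2))) / ε' := by ring
  rw [Real.norm_eq_abs]
  calc |Real.exp (κ * t) * ∫ s in (0:ℝ)..t, h s * y (t - s)|
      ≤ ∫ s in (0:ℝ)..t, C * Real.exp (-(ε' * s)) * g (t - s) := key
    _ = _ + _ := hsplit
    _ ≤ ε / 4 + C * M * Real.exp (-(ε' * (t / 2))) / ε' := add_le_add hb1 hb2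
    _ < ε := by linarith
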